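/- Let R be a subring of a division ring T. Then the rational closure of R in T is a division ring and equals the division closure of R in T. -/

import Mathlib

/-- The rational closure of a subset `R` of a ring `T`. -/
def ratClosure {T : Type*} [Ring T] (R : Set T) : Set T :=
  {x | ∃ (n : ℕ) (A B : Matrix (Fin n) (Fin n) T),
    (∀ i j, A i j ∈ R) ∧ A * B = 1 ∧ B * A = 1 ∧ ∃ i j, x = B i j}

/-- The division closure of a subring `R` of a ring `T`. -/
def divClosure {T : Type*} [Ring T] (R : Subring T) : Subring T :=
  sInf {S : Subring T | R ≤ S ∧ ∀ x ∈ S, ∀ y : T, x * y = 1 ∧ y * x = 1 → y ∈ S}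

section helpers


open Matrix in
theorem key_aux {T : Type*} [DivisionRing T] (S : Subring T)
    (hS : ∀ x ∈ S, ∀ y : T, x * y = 1 ∧ y * x = 1 → y ∈ S)
    {n : ℕ} {A B : Matrix (Fin n) (Fin n) T} (hA : ∀ i j, A i j ∈ S)
    (hAB : A * B = 1) (hBA : B * A = 1) : ∀ i j, B i j ∈ S := by
  letI : DivisionRing S := DivisionRing.ofIsUnitOrEqZero (fun a => by
    rcases eq_or_ne a 0 with h | h
    · exact Or.inr h
    · left
      have ha : (a : T) ≠ 0 := fun h0 => h (Subtype.ext h0)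
      have hy : (a : T)⁻¹ ∈ S := hS a a.2 _ ⟨mul_inv_cancel₀ ha, inv_mul_cancel₀ ha⟩
      exact isUnit_iff_exists.2 ⟨⟨_, hy⟩, Subtype.ext (mul_inv_cancel₀ ha),
        Subtype.ext (inv_mul_cancel₀ ha)⟩)
  set A' : Matrix (Fin n) (Fin n) S := fun i j => ⟨A i j, hA i j⟩ with hA'
  let f : (Fin n → S) →ₗ[S] (Fin n → S) :=
    { toFun := fun v => Matrix.vecMul v A'
      map_add' := fun v w => Matrix.add_vecMul A' v w
      map_smul' := fun c v => by
        ext j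
        simp [Matrix.vecMul, dotProduct, Finset.mul_sum, mul_assoc] }
  have coe_vecMul : ∀ (v : Fin n → S) (j : Fin n),
      ((Matrix.vecMul v A' j : S) : T) = Matrix.vecMul (fun i => (v i : T)) A j := by
    intro v j
    simp [Matrix.vecMul, dotProduct, hA']
  have hinj : Function.Injective f := by
    intro v w hvw
    have h0 : f (v - w) = 0 := by rw [map_sub, hvw, sub_self]
    have hz : Matrix.vecMul (fun i => ((v - w) i : T)) A = 0 := by
      ext j
      rw [← coe_vecMul]
      have : Matrix.vecMul (v - w) A' j = 0 := congrFun h0 j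
      simp [f] at this ⊢
      simpa [f] using congrArg (Subtype.val) this
    have hvweq : (fun i => ((v - w) i : T)) = 0 := by
      have := congrArg (fun u => Matrix.vecMul u B) hz
      simpa [Matrix.vecMul_vecMul, hAB, Matrix.vecMul_one, Matrix.zero_vecMul] using this
    funext i
    have := congrFun hvweq i
    simp at this
    exact sub_eq_zero.mp (Subtype.ext this)
  have hsurj : Function.Surjective f := LinearMap.injective_iff_surjective.mp hinj
  choose w hw using fun i : Fin n => hsurj (Pi.single i 1)
  set C : Matrix (Fin n) (Fin n) T := fun i j => ((w i j : S) : T) with hC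
  have hCA : C * A = 1 := by
    ext i j
    have := congrFun (hw i) j
    have h2 := congrArg Subtype.val this
    simp only [f, LinearMap.coe_mk, AddHom.coe_mk] at h2
    rw [coe_vecMul] at h2
    simp only [Matrix.mul_apply]; simp only [hC]
    rw [show (∑ k, ((w i k : S) : T) * A k j) = Matrix.vecMul (fun k => ((w i k : S):T)) A j
      from by simp [Matrix.vecMul, dotProduct]]
    rw [h2]
    rcases eq_or_ne i j with h | h
    · subst h; simp [Matrix.one_apply, Pi.single_eq_same]
    · simp [Pi.single_apply, h, Matrix.one_apply, Ne.symm h]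
  have hCB : C = B := by
    calc C = C * (A * B) := by rw [hAB, Matrix.mul_one]
    _ = (C * A) * B := by rw [Matrix.mul_assoc]
    _ = B := by rw [hCA, Matrix.one_mul]
  intro i j
  rw [← hCB]
  exact (w i j).2


variable {T : Type*} [Ring T] (R : Subring T)

/-- membership via `Fin n ⊕ Fin m` indexed matrices -/
theorem mem_rc_of_sum {n m : ℕ} (P Q : Matrix (Fin n ⊕ Fin m) (Fin n ⊕ Fin m) T)
    (hP : ∀ i j, P i j ∈ R) (hPQ : P * Q = 1) (hQP : Q * P = 1) :
    ∀ i j, Q i j ∈ ratClosure (R : Set T) := by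
  intro i j
  set e := finSumFinEquiv (m := n) (n := m)
  refine ⟨n + m, P.submatrix e.symm e.symm, Q.submatrix e.symm e.symm,
    fun a b => hP _ _, ?_, ?_, e i, e j, by simp⟩
  · rw [Matrix.submatrix_mul_equiv, hPQ, Matrix.submatrix_one_equiv]
  · rw [Matrix.submatrix_mul_equiv, hQP, Matrix.submatrix_one_equiv]

theorem neg_mem_rc {x : T} (hx : x ∈ ratClosure (R : Set T)) :
    -x ∈ ratClosure (R : Set T) := by
  obtain ⟨n, A, B, hA, hAB, hBA, i, j, rfl⟩ := hx
  exact ⟨n, -A, -B, fun i j => neg_mem (hA i j), by simp [hAB], by simp [hBA],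
    i, j, by simp⟩

theorem coe_subset_rc : (R : Set T) ⊆ ratClosure (R : Set T) := by
  intro r hr
  refine ⟨2, !![1, -r; 0, 1], !![1, r; 0, 1], ?_, ?_, ?_, 0, 1, by simp⟩
  · intro i j; fin_cases i <;> fin_cases j <;>
      simp [one_mem, zero_mem, neg_mem, hr] <;> exact hr
  · ext i j; fin_cases i <;> fin_cases j <;> simp [Matrix.mul_apply, Fin.sum_univ_two]
  · ext i j; fin_cases i <;> fin_cases j <;> simp [Matrix.mul_apply, Fin.sum_univ_two]

theorem one_mem_rc : (1 : T) ∈ ratClosure (R : Set T) := coe_subset_rc R (one_mem R)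

theorem zero_mem_rc : (0 : T) ∈ ratClosure (R : Set T) := coe_subset_rc R (zero_mem R)

/-- main block construction: `B * U * D` entries are in the rational closure -/
theorem blocks_mem_rc {n m : ℕ} {A B : Matrix (Fin n) (Fin n) T}
    {C D : Matrix (Fin m) (Fin m) T} (U : Matrix (Fin n) (Fin m) T)
    (hA : ∀ i j, A i j ∈ R) (hC : ∀ i j, C i j ∈ R) (hU : ∀ i j, U i j ∈ R)
    (hAB : A * B = 1) (hBA : B * A = 1) (hCD : C * D = 1) (hDC : D * C = 1) :
    ∀ i l, (B * U * D) i l ∈ ratClosure (R : Set T) := by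
  intro i l
  have key := mem_rc_of_sum R (Matrix.fromBlocks A (-U) 0 C)
    (Matrix.fromBlocks B (B * U * D) 0 D) ?_ ?_ ?_ (Sum.inl i) (Sum.inr l)
  · simpa using key
  · rintro (a | a) (b | b) <;> simp [hA, hC, hU, neg_mem, zero_mem]
  · rw [Matrix.fromBlocks_multiply]
    have h12 : A * (B * U * D) + (-U) * D = 0 := by
      rw [← Matrix.mul_assoc, ← Matrix.mul_assoc, hAB, Matrix.one_mul, Matrix.neg_mul]
      exact add_neg_cancel _
    rw [hAB, hCD, h12]
    simp [Matrix.fromBlocks_one]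
  · rw [Matrix.fromBlocks_multiply]
    have h12 : B * (-U) + (B * U * D) * C = 0 := by
      rw [Matrix.mul_assoc, Matrix.mul_assoc, hDC, Matrix.mul_one, Matrix.mul_neg]
      exact neg_add_cancel _
    rw [hBA, hDC, h12]
    simp [Matrix.fromBlocks_one]

theorem mul_mem_rc {x y : T} (hx : x ∈ ratClosure (R : Set T))
    (hy : y ∈ ratClosure (R : Set T)) : x * y ∈ ratClosure (R : Set T) := by
  obtain ⟨n, A, B, hA, hAB, hBA, i, j, rfl⟩ := hx
  obtain ⟨m, C, D, hC, hCD, hDC, k, l, rfl⟩ := hy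
  set E : Matrix (Fin n) (Fin m) T := fun p q => if p = j ∧ q = k then 1 else 0 with hE
  have := blocks_mem_rc R E hA hC
    (fun p q => by rw [hE]; dsimp only; split <;> simp [one_mem, zero_mem])
    hAB hBA hCD hDC i l
  have h1 : ∀ q, (B * E) i q = if q = k then B i j else 0 := by
    intro q
    rw [Matrix.mul_apply]; simp only [hE, mul_ite, mul_one, mul_zero]
    by_cases hq : q = k
    · simp [hq, Finset.sum_ite_eq']
    · simp [hq]
  have hentry : (B * E * D) i l = B i j * D k l := by
    rw [Matrix.mul_apply]
    rw [Finset.sum_congr rfl (fun q _ => by rw [h1 q])]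
    simp [Finset.sum_ite_eq', ite_mul]
  rw [hentry] at this
  exact this

theorem add_mem_rc {x y : T} (hx : x ∈ ratClosure (R : Set T))
    (hy : y ∈ ratClosure (R : Set T)) : x + y ∈ ratClosure (R : Set T) := by
  obtain ⟨n, A, B, hA, hAB, hBA, i, j, rfl⟩ := hx
  obtain ⟨m, C, D, hC, hCD, hDC, k, l, rfl⟩ := hy
  set E1 : Matrix (Fin n) (Fin m) T := fun p q => if p = j then C l q else 0 with hE1
  set E2 : Matrix (Fin n) (Fin m) T := fun p q => if q = k then A p i else 0 with hE2
  have := blocks_mem_rc R (E1 + E2) hA hC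
    (fun p q => by
      simp only [Matrix.add_apply]
      refine add_mem ?_ ?_
      · rw [hE1]; dsimp only; split; exacts [hC _ _, zero_mem R]
      · rw [hE2]; dsimp only; split; exacts [hA _ _, zero_mem R])
    hAB hBA hCD hDC i l
  have hBE1 : ∀ q, (B * E1) i q = B i j * C l q := by
    intro q
    rw [Matrix.mul_apply]; simp [hE1, mul_ite, Finset.sum_ite_eq']
  have h1 : (B * E1 * D) i l = B i j := by
    rw [Matrix.mul_apply]
    rw [Finset.sum_congr rfl (fun q _ => by rw [hBE1 q, mul_assoc])]
    rw [← Finset.mul_sum, ← Matrix.mul_apply, hCD]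
    simp [Matrix.one_apply]
  have hE2D : ∀ p, (E2 * D) p l = A p i * D k l := by
    intro p
    rw [Matrix.mul_apply]; simp [hE2, ite_mul, Finset.sum_ite_eq']
  have h2 : (B * E2 * D) i l = D k l := by
    rw [Matrix.mul_assoc, Matrix.mul_apply]
    rw [Finset.sum_congr rfl (fun p _ => by rw [hE2D p, ← mul_assoc])]
    rw [← Finset.sum_mul, ← Matrix.mul_apply, hBA]
    simp [Matrix.one_apply]
  have hentry : (B * (E1 + E2) * D) i l = B i j + D k l := by
    rw [Matrix.mul_add, Matrix.add_mul, Matrix.add_apply, h1, h2]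
  rw [hentry] at this
  exact this

theorem inv_mem_rc {T : Type*} [DivisionRing T] (R : Subring T) {x : T}
    (hx : x ∈ ratClosure (R : Set T)) (hx0 : x ≠ 0) :
    x⁻¹ ∈ ratClosure (R : Set T) := by
  obtain ⟨n, A, B, hA, hAB, hBA, i, j, hxB⟩ := hx
  set b : Matrix (Fin n) (Fin 1) T := fun p _ => if p = j then 1 else 0 with hb
  set c : Matrix (Fin 1) (Fin n) T := fun _ q => if q = i then 1 else 0 with hc
  set s : Matrix (Fin 1) (Fin 1) T := fun _ _ => -x⁻¹ with hs
  have hBb : ∀ p (t : Fin 1), (B * b) p t = B p j := by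
    intro p t
    rw [Matrix.mul_apply]; simp [hb, mul_ite, Finset.sum_ite_eq']
  have hX : c * B * b = fun _ _ => x := by
    ext r t
    rw [Matrix.mul_assoc, Matrix.mul_apply]
    simp only [hc, ite_mul, one_mul, zero_mul]
    rw [Finset.sum_ite_eq' Finset.univ i (fun p => (B * b) p t)]
    simp [hBb, hxB]
  have hs'X : s * (c * B * b) = -1 := by
    ext r t
    rw [Matrix.mul_apply, hX]
    simp [Matrix.mul_apply, hs, Matrix.one_apply, Subsingleton.elim r t,
      inv_mul_cancel₀ hx0]
  have hXs' : (c * B * b) * s = -1 := by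
    ext r t
    rw [Matrix.mul_apply, hX]
    simp [Matrix.mul_apply, hs, Matrix.one_apply, Subsingleton.elim r t,
      mul_inv_cancel₀ hx0]
  have key := mem_rc_of_sum R (Matrix.fromBlocks A b c 0)
    (Matrix.fromBlocks (B + B * b * s * c * B) (-(B * b * s)) (-(s * c * B)) s)
    ?_ ?_ ?_ (Sum.inr 0) (Sum.inr 0)
  · have : (-x⁻¹) ∈ ratClosure (R : Set T) := by rw [Matrix.fromBlocks_apply₂₂] at key; simpa [hs] using key
    simpa using neg_mem_rc R this
  · rintro (a | a) (d | d) <;>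
      simp only [Matrix.fromBlocks_apply₁₁, Matrix.fromBlocks_apply₁₂,
        Matrix.fromBlocks_apply₂₁, Matrix.fromBlocks_apply₂₂, Matrix.zero_apply]
    · exact hA _ _
    · rw [hb]; dsimp only; split; exacts [one_mem R, zero_mem R]
    · rw [hc]; dsimp only; split; exacts [one_mem R, zero_mem R]
    · exact zero_mem R
  · rw [Matrix.fromBlocks_multiply]
    have tl : A * (B + B * b * s * c * B) + b * (-(s * c * B)) = 1 := by
      simp only [Matrix.mul_add, Matrix.mul_neg, ← Matrix.mul_assoc]
      rw [hAB, Matrix.one_mul]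
      abel
    have tr : A * (-(B * b * s)) + b * s = 0 := by
      simp only [Matrix.mul_neg, ← Matrix.mul_assoc]
      rw [hAB, Matrix.one_mul]
      abel
    have bl : c * (B + B * b * s * c * B) + (0 : Matrix (Fin 1) (Fin 1) T) * (-(s * c * B)) = 0 := by
      simp only [Matrix.mul_add, Matrix.zero_mul, add_zero, ← Matrix.mul_assoc]
      rw [show c * B * b * s * c * B = ((c * B * b) * s) * c * B from by
        simp only [Matrix.mul_assoc], hXs']
      simp only [Matrix.neg_mul, Matrix.one_mul]
      abel
    have br : c * (-(B * b * s)) + (0 : Matrix (Fin 1) (Fin 1) T) * s = 1 := by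
      simp only [Matrix.mul_neg, Matrix.zero_mul, add_zero, ← Matrix.mul_assoc]
      rw [show c * B * b * s = ((c * B * b) * s) from by simp only [Matrix.mul_assoc], hXs']
      simp
    rw [tl, tr, bl, br, Matrix.fromBlocks_one]
  · rw [Matrix.fromBlocks_multiply]
    have tl : (B + B * b * s * c * B) * A + (-(B * b * s)) * c = 1 := by
      simp only [Matrix.add_mul, Matrix.neg_mul, ← Matrix.mul_assoc]
      rw [Matrix.mul_assoc (B * b * s * c) B A, hBA, Matrix.mul_one]
      abel
    have tr : (B + B * b * s * c * B) * b + (-(B * b * s)) * (0 : Matrix (Fin 1) (Fin 1) T) = 0 := by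
      simp only [Matrix.add_mul, Matrix.mul_zero, add_zero, ← Matrix.mul_assoc]
      rw [show B * b * s * c * B * b = (B * b) * (s * (c * B * b)) from by
        simp only [Matrix.mul_assoc], hs'X]
      simp only [Matrix.mul_neg, Matrix.mul_one]
      abel
    have bl : (-(s * c * B)) * A + s * c = 0 := by
      simp only [Matrix.neg_mul, ← Matrix.mul_assoc]
      rw [Matrix.mul_assoc (s * c) B A, hBA, Matrix.mul_one]
      abel
    have br : (-(s * c * B)) * b + s * (0 : Matrix (Fin 1) (Fin 1) T) = 1 := by
      simp only [Matrix.neg_mul, Matrix.mul_zero, add_zero]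
      rw [show s * c * B * b = s * (c * B * b) from by simp only [Matrix.mul_assoc], hs'X]
      simp
    rw [tl, tr, bl, br, Matrix.fromBlocks_one]


end helpers

/-- If `T` is a division ring, then the rational closure of a subring `R` of `T`
is a division ring (closed under inverses of its nonzero elements) and equals the division
closure of `R` in `T`. -/
theorem stmt_6 {T : Type*} [DivisionRing T] (R : Subring T) :
    (∀ x ∈ ratClosure (R : Set T), x ≠ 0 → x⁻¹ ∈ ratClosure (R : Set T)) ∧
    ratClosure (R : Set T) = (divClosure R : Set T) := by
  refine ⟨fun x hx h0 => inv_mem_rc R hx h0, ?_⟩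
  apply Set.Subset.antisymm
  · -- ratClosure ⊆ divClosure
    rintro x ⟨n, A, B, hA, hAB, hBA, i, j, rfl⟩
    have hRle : R ≤ divClosure R := le_sInf fun S hS => hS.1
    have hcl : ∀ x ∈ divClosure R, ∀ y : T, x * y = 1 ∧ y * x = 1 → y ∈ divClosure R := by
      intro x hx y hy
      rw [divClosure, Subring.mem_sInf] at hx ⊢
      intro S hS
      exact hS.2 x (hx S hS) y hy
    exact key_aux (divClosure R) hcl (fun i j => hRle (hA i j)) hAB hBA i j
  · -- divClosure ⊆ ratClosure
    let S₀ : Subring T :=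
      { carrier := ratClosure (R : Set T)
        one_mem' := one_mem_rc R
        mul_mem' := fun hx hy => mul_mem_rc R hx hy
        add_mem' := fun hx hy => add_mem_rc R hx hy
        zero_mem' := zero_mem_rc R
        neg_mem' := fun hx => neg_mem_rc R hx }
    have hle : divClosure R ≤ S₀ := by
      apply sInf_le
      refine ⟨fun r hr => coe_subset_rc R hr, fun x hx y hy => ?_⟩
      have hx0 : x ≠ 0 := by
        rintro rfl
        rw [zero_mul] at hy
        exact one_ne_zero hy.1.symm
      have hyx : y = x⁻¹ := eq_inv_of_mul_eq_one_left hy.2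
      rw [hyx]
      exact inv_mem_rc R hx hx0
    exact fun x hx => hle hx
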